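/- Let (Ω, 𝒜, P) be a probability space with filtration (ℱ_t)_{t≥0}, let (Δ_t)_{t≥1} and (Δ'_t)_{t≥1} be integrable real random variables with Δ_t and Δ'_t ℱ_t-measurable and E[Δ_t | ℱ_{t−1}] = 0, E[Δ'_t | ℱ_{t−1}] = 0 almost surely, let (γ_t)_{t≥2} be real numbers in [0,1), set Γ_1 = 1 and Γ_t = ∏_{i=2}^{t}(1−γ_i), and define M_1 = Δ_1, M_t = Δ_t − (1−γ_t)·Δ'_t + (1−γ_t)·M_{t−1} for t ≥ 2. Then the process (M_t/Γ_t)_{t≥1} is a martingale with respect to the filtration (ℱ_t)_{t≥1}, and E[M_1/Γ_1 | ℱ_0] = 0 almost surely. -/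

import Mathlib

open MeasureTheory Filter

/-- Martingale structure of the OEUVRE process: with `Γ₁ = 1`,
`Γ_t = ∏_{i=2}^t (1 - γ_i)`, `M₁ = Δ₁`, and
`M_t = Δ_t - (1-γ_t)Δ'_t + (1-γ_t)M_{t-1}`, the process `(M_t/Γ_t)_{t ≥ 1}` is a
martingale with respect to `(ℱ_t)_{t ≥ 1}` (it is integrable, adapted, and
satisfies `E[M_t/Γ_t | ℱ_s] = M_s/Γ_s` for `1 ≤ s ≤ t`), and
`E[M₁/Γ₁ | ℱ₀] = 0` almost surely. -/
theorem oeuvre_martingale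
    {Ω : Type*} {m0 : MeasurableSpace Ω} {μ : Measure Ω} [IsProbabilityMeasure μ]
    (ℱ : Filtration ℕ m0)
    (Δ Δ' : ℕ → Ω → ℝ) (γ : ℕ → ℝ)
    (hΔint : ∀ t ≥ 1, Integrable (Δ t) μ)
    (hΔ'int : ∀ t ≥ 1, Integrable (Δ' t) μ)
    (hΔmeas : ∀ t ≥ 1, StronglyMeasurable[ℱ t] (Δ t))
    (hΔ'meas : ∀ t ≥ 1, StronglyMeasurable[ℱ t] (Δ' t))
    (hΔcond : ∀ t ≥ 1, μ[Δ t | ℱ (t - 1)] =ᵐ[μ] 0)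
    (hΔ'cond : ∀ t ≥ 1, μ[Δ' t | ℱ (t - 1)] =ᵐ[μ] 0)
    (hγ : ∀ t ≥ 2, γ t ∈ Set.Ico (0 : ℝ) 1)
    (Γ : ℕ → ℝ) (hΓ : ∀ t ≥ 1, Γ t = ∏ i ∈ Finset.Icc 2 t, (1 - γ i))
    (M : ℕ → Ω → ℝ)
    (hM1 : M 1 = Δ 1)
    (hMrec : ∀ t ≥ 2, ∀ ω,
      M t ω = Δ t ω - (1 - γ t) * Δ' t ω + (1 - γ t) * M (t - 1) ω) :
    (∀ t ≥ 1, Integrable (fun ω => M t ω / Γ t) μ) ∧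
    (∀ t ≥ 1, StronglyMeasurable[ℱ t] (fun ω => M t ω / Γ t)) ∧
    (∀ s t : ℕ, 1 ≤ s → s ≤ t →
      μ[fun ω => M t ω / Γ t | ℱ s] =ᵐ[μ] fun ω => M s ω / Γ s) ∧
    μ[fun ω => M 1 ω / Γ 1 | ℱ 0] =ᵐ[μ] 0 := by
  have hΓ1 : Γ 1 = 1 := by rw [hΓ 1 le_rfl]; simp
  have hΓpos : ∀ t ≥ 1, 0 < Γ t := by
    intro t ht
    rw [hΓ t ht]
    apply Finset.prod_pos
    intro i hi
    have := (hγ i (Finset.mem_Icc.mp hi).1).2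
    linarith
  have hΓrec : ∀ t ≥ 2, Γ t = (1 - γ t) * Γ (t - 1) := by
    intro t ht
    obtain ⟨u, rfl⟩ : ∃ u, t = u + 1 := ⟨t - 1, by omega⟩
    rw [hΓ _ (by omega), hΓ _ (by omega), Finset.prod_Icc_succ_top (by omega)]
    simp [mul_comm]
  have key : ∀ t ≥ 1, Integrable (M t) μ ∧ StronglyMeasurable[ℱ t] (M t) := by
    intro t ht
    induction t, ht using Nat.le_induction with
    | base => rw [hM1]; exact ⟨hΔint 1 le_rfl, hΔmeas 1 le_rfl⟩
    | succ n hn ih =>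
      have heq : M (n + 1) = fun ω =>
          Δ (n + 1) ω - (1 - γ (n + 1)) * Δ' (n + 1) ω + (1 - γ (n + 1)) * M n ω := by
        funext ω
        have := hMrec (n + 1) (by omega) ω
        simpa using this
      refine ⟨?_, ?_⟩
      · rw [heq]
        exact ((hΔint (n + 1) (by omega)).sub
          ((hΔ'int (n + 1) (by omega)).const_mul _)).add (ih.1.const_mul _)
      · rw [heq]
        exact ((hΔmeas (n + 1) (by omega)).sub
          (stronglyMeasurable_const.mul (hΔ'meas (n + 1) (by omega)))).add
          (stronglyMeasurable_const.mul (ih.2.mono (ℱ.mono (by omega))))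
  have hNint : ∀ t ≥ 1, Integrable (fun ω => M t ω / Γ t) μ :=
    fun t ht => (key t ht).1.div_const _
  have hNmeas : ∀ t ≥ 1, StronglyMeasurable[ℱ t] (fun ω => M t ω / Γ t) := by
    intro t ht
    simp only [div_eq_mul_inv]
    exact (key t ht).2.mul_const _
  have step : ∀ t ≥ 2, μ[fun ω => M t ω / Γ t | ℱ (t - 1)]
      =ᵐ[μ] fun ω => M (t - 1) ω / Γ (t - 1) := by
    intro t ht
    have hΓt := hΓpos t (by omega)
    have hΓt1 := hΓpos (t - 1) (by omega)
    have hγt : (0 : ℝ) < 1 - γ t := by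
      have := (hγ t ht).2; linarith
    have hsplit : (fun ω => M t ω / Γ t) =
        ((Γ t)⁻¹ • Δ t) - ((Γ (t - 1))⁻¹ • Δ' t)
          + fun ω => M (t - 1) ω / Γ (t - 1) := by
      funext ω
      have hrec := hMrec t ht ω
      have hΓr := hΓrec t ht
      simp only [Pi.add_apply, Pi.sub_apply, Pi.smul_apply, smul_eq_mul]
      rw [hrec, hΓr]
      field_simp
    rw [hsplit]
    have hint1 : Integrable ((Γ t)⁻¹ • Δ t) μ :=
      (hΔint t (by omega)).smul _
    have hint2 : Integrable ((Γ (t - 1))⁻¹ • Δ' t) μ :=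
      (hΔ'int t (by omega)).smul _
    have hint3 : Integrable (fun ω => M (t - 1) ω / Γ (t - 1)) μ :=
      hNint (t - 1) (by omega)
    have h1 : μ[(Γ t)⁻¹ • Δ t | ℱ (t - 1)] =ᵐ[μ] 0 := by
      have := condExp_smul (μ := μ) (m := ℱ (t - 1)) ((Γ t)⁻¹) (Δ t)
      refine this.trans ?_
      filter_upwards [hΔcond t (by omega)] with ω hω
      simp [hω]
    have h2 : μ[(Γ (t - 1))⁻¹ • Δ' t | ℱ (t - 1)] =ᵐ[μ] 0 := by
      have := condExp_smul (μ := μ) (m := ℱ (t - 1)) ((Γ (t - 1))⁻¹) (Δ' t)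
      refine this.trans ?_
      filter_upwards [hΔ'cond t (by omega)] with ω hω
      simp [hω]
    have h3 : μ[fun ω => M (t - 1) ω / Γ (t - 1) | ℱ (t - 1)]
        =ᵐ[μ] fun ω => M (t - 1) ω / Γ (t - 1) :=
      Filter.EventuallyEq.of_eq
        (condExp_of_stronglyMeasurable (ℱ.le _) (hNmeas (t - 1) (by omega)) hint3)
    calc μ[((Γ t)⁻¹ • Δ t) - ((Γ (t - 1))⁻¹ • Δ' t)
          + fun ω => M (t - 1) ω / Γ (t - 1) | ℱ (t - 1)]
        =ᵐ[μ] μ[((Γ t)⁻¹ • Δ t) - ((Γ (t - 1))⁻¹ • Δ' t) | ℱ (t - 1)]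
          + μ[fun ω => M (t - 1) ω / Γ (t - 1) | ℱ (t - 1)] :=
          condExp_add (hint1.sub hint2) hint3 _
      _ =ᵐ[μ] (μ[(Γ t)⁻¹ • Δ t | ℱ (t - 1)]
            - μ[(Γ (t - 1))⁻¹ • Δ' t | ℱ (t - 1)])
          + μ[fun ω => M (t - 1) ω / Γ (t - 1) | ℱ (t - 1)] :=
          EventuallyEq.add (condExp_sub hint1 hint2 _) EventuallyEq.rfl
      _ =ᵐ[μ] fun ω => M (t - 1) ω / Γ (t - 1) := by
          filter_upwards [h1, h2, h3] with ω e1 e2 e3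
          simp [e1, e2, e3]
  have mart : ∀ s t : ℕ, 1 ≤ s → s ≤ t →
      μ[fun ω => M t ω / Γ t | ℱ s] =ᵐ[μ] fun ω => M s ω / Γ s := by
    intro s t hs hst
    induction t, hst using Nat.le_induction with
    | base =>
      exact Filter.EventuallyEq.of_eq
        (condExp_of_stronglyMeasurable (ℱ.le s) (hNmeas s hs) (hNint s hs))
    | succ n hn ih =>
      have h1 : μ[fun ω => M (n + 1) ω / Γ (n + 1) | ℱ s]
          =ᵐ[μ] μ[μ[fun ω => M (n + 1) ω / Γ (n + 1) | ℱ n] | ℱ s] :=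
        (condExp_condExp_of_le (ℱ.mono hn) (ℱ.le n)).symm
      have h2 : μ[fun ω => M (n + 1) ω / Γ (n + 1) | ℱ n]
          =ᵐ[μ] fun ω => M n ω / Γ n := by
        have := step (n + 1) (by omega)
        simpa using this
      exact h1.trans ((condExp_congr_ae h2).trans ih)
  refine ⟨hNint, hNmeas, mart, ?_⟩
  have : (fun ω => M 1 ω / Γ 1) = Δ 1 := by
    funext ω; rw [hM1, hΓ1, div_one]
  rw [this]
  simpa using hΔcond 1 le_rfl
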